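/- Let T be a positive bounded operator on a complex Hilbert space H and x a unit vector. Then ⟨T x, x⟩^r ≤ ⟨T^r x, x⟩ for every real r ≥ 1. -/

import Mathlib

open scoped InnerProductSpace
open ContinuousLinearMap Complex

variable {H : Type*} [NormedAddCommGroup H] [InnerProductSpace ℂ H] [CompleteSpace H]

/-- `T ^ e` for a (positive) operator `T`, via the continuous functional calculus. -/
noncomputable def opow (T : H →L[ℂ] H) (e : ℝ) : H →L[ℂ] H :=
  cfc (fun t : ℝ => t ^ e) T

/-- The absolute value `|T| = (T*T)^(1/2)` of an operator. -/
noncomputable def oabs (T : H →L[ℂ] H) : H →L[ℂ] H :=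
  cfc Real.sqrt (ContinuousLinearMap.adjoint T * T)

/-- Tangent line inequality for rpow. -/
lemma tangent_rpow {a t r : ℝ} (ha : 0 ≤ a) (ht : 0 ≤ t) (hr : 1 ≤ r) :
    a ^ r + r * a ^ (r - 1) * (t - a) ≤ t ^ r := by
  rcases eq_or_lt_of_le ha with rfl | ha
  · rcases eq_or_lt_of_le hr with rfl | hr
    · simp [Real.rpow_one]
    · rw [Real.zero_rpow (by linarith), Real.zero_rpow (by linarith)]
      simpa using Real.rpow_nonneg ht r
  · have hs : -1 ≤ (t - a) / a := by
      rw [le_div_iff₀ ha]; linarith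
    have hber := one_add_mul_self_le_rpow_one_add hs hr
    have h1 : (1 : ℝ) + (t - a) / a = t / a := by field_simp; ring
    rw [h1] at hber
    have := mul_le_mul_of_nonneg_left hber (Real.rpow_nonneg ha.le r)
    calc a ^ r + r * a ^ (r - 1) * (t - a)
        = a ^ r * (1 + r * ((t - a) / a)) := by
          rw [Real.rpow_sub ha, Real.rpow_one]; field_simp
      _ ≤ a ^ r * (t / a) ^ r := this
      _ = t ^ r := by
          rw [Real.div_rpow ht ha.le]
          field_simp

/-- McCarthy's inequality. -/
theorem mccarthy_one (T : H →L[ℂ] H) (hT : T.IsPositive) (x : H) (hx : ‖x‖ = 1)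
    (r : ℝ) (hr : 1 ≤ r) :
    (⟪T x, x⟫_ℂ).re ^ r ≤ (⟪opow T r x, x⟫_ℂ).re := by
  set a : ℝ := (⟪T x, x⟫_ℂ).re with ha_def
  have hsa : IsSelfAdjoint T := hT.isSelfAdjoint
  have ha : 0 ≤ a := hT.re_inner_nonneg_left x
  have hTnn : (0 : H →L[ℂ] H) ≤ T := (nonneg_iff_isPositive T).mpr hT
  have hspec : ∀ t ∈ spectrum ℝ T, 0 ≤ t := fun t ht =>
    spectrum_nonneg_of_nonneg hTnn ht
  set c : ℝ := r * a ^ (r - 1) with hc_def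
  set b : ℝ := a ^ r - c * a with hb_def
  have hcont : ContinuousOn (fun t : ℝ => t ^ r) (spectrum ℝ T) :=
    (Real.continuous_rpow_const (by linarith)).continuousOn
  have key : cfc (fun t : ℝ => c * t + b) T ≤ opow T r := by
    unfold opow
    apply cfc_mono ?_ (by fun_prop) hcont
    intro t ht
    have := tangent_rpow ha (hspec t ht) hr
    simp only [hb_def, hc_def]
    nlinarith [this]
  have heq : cfc (fun t : ℝ => c * t + b) T = c • T + b • (1 : H →L[ℂ] H) := by
    rw [cfc_add T (fun t => c * t) (fun _ => b), cfc_const_mul_id c T hsa,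
      cfc_const b T hsa, Algebra.algebraMap_eq_smul_one]
  have hca : c * a = r * a ^ r := by
    rcases eq_or_lt_of_le ha with h0 | h0
    · rcases eq_or_lt_of_le hr with h1 | h1
      · simp [hc_def, ← h0, ← h1]
      · simp [hc_def, ← h0, Real.zero_rpow (by linarith : r - 1 ≠ 0),
          Real.zero_rpow (by linarith : r ≠ 0)]
    · rw [hc_def, mul_assoc, ← Real.rpow_add_one (ne_of_gt h0)]
      ring_nf
  have hfin : (⟪(c • T + b • (1 : H →L[ℂ] H)) x, x⟫_ℂ).re = a ^ r := by
    have hxx : ⟪x, x⟫_ℂ = 1 := by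
      rw [inner_self_eq_norm_sq_to_K, hx]; norm_num
    simp only [ContinuousLinearMap.add_apply, ContinuousLinearMap.smul_apply,
      ContinuousLinearMap.one_apply, inner_add_left, inner_smul_real_left, hxx,
      Complex.add_re, Complex.real_smul, Complex.mul_re, Complex.ofReal_re,
      Complex.ofReal_im, mul_one]
    rw [RCLike.real_smul_eq_coe_smul (K := ℂ) c, RCLike.real_smul_eq_coe_smul (K := ℂ) b,
      inner_smul_left, inner_smul_left, hxx]
    simp only [RCLike.conj_ofReal]
    norm_num [Complex.re_ofReal_mul, ← ha_def, hb_def]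
  have hle := (le_def _ _).mp (heq ▸ key)
  have h2 := hle.re_inner_nonneg_left x
  simp only [ContinuousLinearMap.sub_apply, inner_sub_left, map_sub,
    RCLike.re_to_complex] at h2
  linarith [hfin ▸ h2]
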